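/- Let X be a quandle. Then the subgroups C^D_n(X) of the rack chain complex generated by tuples (x₁,…,xₙ) with xᵢ = x_{i+1} for some i form a subcomplex: the rack boundary ∂ maps C^D_n(X) into C^D_{n-1}(X). -/

import Mathlib

/-- The `i`-th face `∂¹ᵢ` of the rack complex, lists encoding tuples. -/
def rackFace1 {X : Type*} (act : X → X → X) (l : List X) (i : ℕ) : List X :=
  match l[i]? with
  | some b => (l.take i).map (fun a => act a b) ++ l.drop (i + 1)
  | none => l

/-- The rack boundary `∂ = Σᵢ (-1)ⁱ (∂⁰ᵢ - ∂¹ᵢ)`. -/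
noncomputable def rackBnd {X : Type*} (act : X → X → X) (c : List X →₀ ℤ) : List X →₀ ℤ :=
  c.sum fun l z =>
    ∑ i ∈ Finset.range l.length,
      (Finsupp.single (l.eraseIdx i) ((-1) ^ (i + 1) * z)
        - Finsupp.single (rackFace1 act l i) ((-1) ^ (i + 1) * z))

/-- A tuple is degenerate if two consecutive entries coincide. -/
def Degenerate {X : Type*} (l : List X) : Prop :=
  ∃ (l₁ : List X) (a : X) (l₂ : List X), l = l₁ ++ a :: a :: l₂

lemma rackFace1_eq {X : Type*} (act : X → X → X) (l : List X) (i : ℕ) (b : X)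
    (h : l[i]? = some b) :
    rackFace1 act l i = (l.take i).map (fun a => act a b) ++ l.drop (i + 1) := by
  simp [rackFace1, h]

lemma mem_closure_single {X : Type*} {l' : List X} (h : Degenerate l') (z : ℤ) :
    (Finsupp.single l' z : List X →₀ ℤ) ∈ AddSubgroup.closure
      {c : List X →₀ ℤ | ∃ l'' : List X, Degenerate l'' ∧ c = Finsupp.single l'' 1} := by
  have hz : (Finsupp.single l' z : List X →₀ ℤ) = z • Finsupp.single l' 1 := by
    simp [Finsupp.smul_single]
  have hmem : (Finsupp.single l' 1 : List X →₀ ℤ) ∈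
      {c : List X →₀ ℤ | ∃ l'' : List X, Degenerate l'' ∧ c = Finsupp.single l'' 1} :=
    ⟨l', h, rfl⟩
  rw [hz]
  exact AddSubgroup.zsmul_mem _ (AddSubgroup.subset_closure hmem) z

/-- For a quandle `X`, the degenerate tuples span a subcomplex of the rack complex:
the boundary of a degenerate tuple lies in the subgroup generated by degenerate tuples. -/
theorem stmt_4 {X : Type*} (act : X → X → X)
    (hbij : ∀ b : X, Function.Bijective fun a => act a b)
    (hdist : ∀ a b c : X, act (act a b) c = act (act a c) (act b c))
    (hidem : ∀ a : X, act a a = a) :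
    ∀ l : List X, Degenerate l →
      rackBnd act (Finsupp.single l 1) ∈
        AddSubgroup.closure
          {c : List X →₀ ℤ | ∃ l' : List X, Degenerate l' ∧ c = Finsupp.single l' 1} := by
  rintro l ⟨l₁, a, l₂, rfl⟩
  rw [rackBnd, Finsupp.sum_single_index (by simp)]
  have hlen : (l₁ ++ a :: a :: l₂).length = l₁.length + 2 + l₂.length := by
    simp; ring
  set g : ℕ → (List X →₀ ℤ) := fun i =>
    Finsupp.single ((l₁ ++ a :: a :: l₂).eraseIdx i) ((-1) ^ (i + 1) * 1)
      - Finsupp.single (rackFace1 act (l₁ ++ a :: a :: l₂) i) ((-1) ^ (i + 1) * 1) with hg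
  have hkmem : l₁.length ∈ Finset.range (l₁ ++ a :: a :: l₂).length := by
    simp only [Finset.mem_range, hlen]; omega
  have hk1mem : l₁.length + 1 ∈ (Finset.range (l₁ ++ a :: a :: l₂).length).erase l₁.length := by
    simp only [Finset.mem_erase, Finset.mem_range, hlen]; omega
  rw [← Finset.add_sum_erase _ g hkmem, ← Finset.add_sum_erase _ g hk1mem, ← add_assoc]
  -- the two middle terms cancel
  have hE1 : (l₁ ++ a :: a :: l₂).eraseIdx l₁.length = l₁ ++ a :: l₂ := by
    rw [List.eraseIdx_append_of_length_le (le_refl _)]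
    simp
  have hE2 : (l₁ ++ a :: a :: l₂).eraseIdx (l₁.length + 1) = l₁ ++ a :: l₂ := by
    rw [List.eraseIdx_append_of_length_le (by omega)]
    have h1 : l₁.length + 1 - l₁.length = 1 := by omega
    rw [h1]
    simp [List.eraseIdx]
  have hF1 : rackFace1 act (l₁ ++ a :: a :: l₂) l₁.length
      = l₁.map (fun x => act x a) ++ a :: l₂ := by
    rw [rackFace1_eq act _ _ a (by rw [List.getElem?_append_right (le_refl _)]; simp)]
    rw [List.take_left, List.drop_append]
    have h1 : l₁.length + 1 - l₁.length = 1 := by omega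
    rw [h1, List.drop_eq_nil_of_le (by omega : l₁.length ≤ l₁.length + 1)]
    simp
  have hF2 : rackFace1 act (l₁ ++ a :: a :: l₂) (l₁.length + 1)
      = l₁.map (fun x => act x a) ++ a :: l₂ := by
    rw [rackFace1_eq act _ _ a
      (by rw [List.getElem?_append_right (by omega)]
          have h1 : l₁.length + 1 - l₁.length = 1 := by omega
          rw [h1]; simp)]
    rw [List.take_append, List.drop_append]
    have h1 : l₁.length + 1 - l₁.length = 1 := by omega
    have h2 : l₁.length + 1 + 1 - l₁.length = 2 := by omega
    rw [h1, h2, List.take_of_length_le (by omega : l₁.length ≤ l₁.length + 1),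
        List.drop_eq_nil_of_le (by omega : l₁.length ≤ l₁.length + 1 + 1)]
    simp [hidem]
  have hcancel : g l₁.length + g (l₁.length + 1) = 0 := by
    simp only [hg, hE1, hE2, hF1, hF2]
    have hs : ((-1 : ℤ)) ^ (l₁.length + 1 + 1) * 1 = -((-1) ^ (l₁.length + 1) * 1) := by ring
    rw [hs, Finsupp.single_neg, Finsupp.single_neg]
    abel
  rw [hcancel, zero_add]
  refine AddSubgroup.sum_mem _ ?_
  intro i hi
  simp only [Finset.mem_erase, Finset.mem_range] at hi
  obtain ⟨hne1, hne2, hilt⟩ := hi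
  rw [hlen] at hilt
  have hicases : i < l₁.length ∨ l₁.length + 2 ≤ i := by omega
  obtain ⟨b, hb⟩ : ∃ b, (l₁ ++ a :: a :: l₂)[i]? = some b :=
    ⟨_, List.getElem?_eq_getElem (by rw [hlen]; omega)⟩
  have hface : rackFace1 act (l₁ ++ a :: a :: l₂) i
      = ((l₁ ++ a :: a :: l₂).take i).map (fun x => act x b)
        ++ (l₁ ++ a :: a :: l₂).drop (i + 1) := rackFace1_eq act _ _ b hb
  refine sub_mem (mem_closure_single ?_ _) (mem_closure_single ?_ _)
  · -- eraseIdx degenerate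
    rcases hicases with h | h
    · refine ⟨l₁.eraseIdx i, a, l₂, ?_⟩
      rw [List.eraseIdx_append_of_lt_length h]
    · refine ⟨l₁, a, l₂.eraseIdx (i - (l₁.length + 2)), ?_⟩
      rw [List.eraseIdx_append_of_length_le (by omega)]
      have h1 : i - l₁.length = (i - (l₁.length + 2)) + 2 := by omega
      rw [h1]
      simp [List.eraseIdx]
  · -- face degenerate
    rcases hicases with h | h
    · refine ⟨(l₁.take i).map (fun x => act x b) ++ l₁.drop (i + 1), a, l₂, ?_⟩
      rw [hface, List.take_append, List.drop_append]
      have h1 : i - l₁.length = 0 := by omega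
      have h2 : i + 1 - l₁.length = 0 := by omega
      rw [h1, h2]
      simp
    · refine ⟨l₁.map (fun x => act x b), act a b,
        (l₂.take (i - (l₁.length + 2))).map (fun x => act x b)
          ++ (a :: a :: l₂).drop (i + 1 - l₁.length), ?_⟩
      rw [hface, List.take_append, List.drop_append]
      rw [List.take_of_length_le (by omega : l₁.length ≤ i),
          List.drop_eq_nil_of_le (by omega : l₁.length ≤ i + 1)]
      have h1 : i - l₁.length = (i - (l₁.length + 2)) + 2 := by omega
      rw [h1]
      have h2 : List.take ((i - (l₁.length + 2)) + 2) (a :: a :: l₂)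
          = a :: a :: l₂.take (i - (l₁.length + 2)) := by simp
      rw [h2]
      simp
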